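/- For every positive integer n and all subsets S₁, S₂, S₃ of {1,...,n}, the number of permutations π of {1,...,n} with (Asc₂(π), Des(π), Suc(π)) = (S₁, S₂, S₃) equals the number of permutations π of {1,...,n} with (Êxc(π), Aexc(π), F̂ix(π)) = (S₁, S₂, S₃). -/

import Mathlib

open Finset

/-- The one-line notation value of `π` at position `k ∈ {1,…,n}`:
`oneLine π k = π(k)` with `1`-indexed positions and values. -/
def oneLine {n : ℕ} (π : Equiv.Perm (Fin n)) (k : ℕ) : ℕ :=
  if h : k - 1 < n then ((π ⟨k - 1, h⟩ : Fin n) : ℕ) + 1 else k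

/-- `SUC(π) = {i ∈ {1,…,n-1} : π(i+1) = π(i)+1}` (position set). -/
def SUC {n : ℕ} (π : Equiv.Perm (Fin n)) : Finset ℕ :=
  (Finset.Icc 1 (n - 1)).filter (fun i => oneLine π (i + 1) = oneLine π i + 1)

/-- `FIX(π) = {i ∈ {1,…,n-1} : π(i) = i}` (position set). -/
def FIX {n : ℕ} (π : Equiv.Perm (Fin n)) : Finset ℕ :=
  (Finset.Icc 1 (n - 1)).filter (fun i => oneLine π i = i)

/-- `Asc₂(π) = {π(i+1) : i ∈ {1,…,n-1}, π(i+1) ≥ π(i)+2}` (value set). -/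
def Asc2 {n : ℕ} (π : Equiv.Perm (Fin n)) : Finset ℕ :=
  ((Finset.Icc 1 (n - 1)).filter (fun i => oneLine π i + 2 ≤ oneLine π (i + 1))).image
    (fun i => oneLine π (i + 1))

/-- `Des(π) = {π(i+1) : i ∈ {1,…,n-1}, π(i) > π(i+1)}` (value set). -/
def DesSet {n : ℕ} (π : Equiv.Perm (Fin n)) : Finset ℕ :=
  ((Finset.Icc 1 (n - 1)).filter (fun i => oneLine π (i + 1) < oneLine π i)).image
    (fun i => oneLine π (i + 1))

/-- `Suc(π) = {π(i+1) : i ∈ {1,…,n-1}, π(i+1) = π(i)+1}` (value set). -/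
def SucSet {n : ℕ} (π : Equiv.Perm (Fin n)) : Finset ℕ :=
  ((Finset.Icc 1 (n - 1)).filter (fun i => oneLine π (i + 1) = oneLine π i + 1)).image
    (fun i => oneLine π (i + 1))

/-- `Aexc(π) = {π(i) : i ∈ {2,…,n}, π(i) < i}` (value set). -/
def Aexc {n : ℕ} (π : Equiv.Perm (Fin n)) : Finset ℕ :=
  ((Finset.Icc 2 n).filter (fun i => oneLine π i < i)).image (fun i => oneLine π i)

/-- `Êxc(π) = {π(i) : i ∈ {2,…,n}, π(i) > i}` (value set). -/
def ExcHat {n : ℕ} (π : Equiv.Perm (Fin n)) : Finset ℕ :=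
  ((Finset.Icc 2 n).filter (fun i => i < oneLine π i)).image (fun i => oneLine π i)

/-- `F̂ix(π) = {π(i) : i ∈ {2,…,n}, π(i) = i}` (value set). -/
def FixHat {n : ℕ} (π : Equiv.Perm (Fin n)) : Finset ℕ :=
  ((Finset.Icc 2 n).filter (fun i => oneLine π i = i)).image (fun i => oneLine π i)

/-- `depth(π) = ∑_{i : π(i) > i} (π(i) − i)`. -/
def depthStat {n : ℕ} (π : Equiv.Perm (Fin n)) : ℕ :=
  ∑ i ∈ (Finset.Icc 1 n).filter (fun i => i < oneLine π i), (oneLine π i - i)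

/-- `drp(π) = ∑_{i ∈ {1,…,n-1} : π(i) > π(i+1)} (π(i) − π(i+1))`. -/
def drpStat {n : ℕ} (π : Equiv.Perm (Fin n)) : ℕ :=
  ∑ i ∈ (Finset.Icc 1 (n - 1)).filter (fun i => oneLine π (i + 1) < oneLine π i),
    (oneLine π i - oneLine π (i + 1))

/-- `exc(π) = |{i ∈ {1,…,n} : π(i) > i}|`. -/
def excNum {n : ℕ} (π : Equiv.Perm (Fin n)) : ℕ :=
  ((Finset.Icc 1 n).filter (fun i => i < oneLine π i)).card

/-- `nexc(π) = |{i ∈ {1,…,n} : π(i) < i}|`. -/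
def nexcNum {n : ℕ} (π : Equiv.Perm (Fin n)) : ℕ :=
  ((Finset.Icc 1 n).filter (fun i => oneLine π i < i)).card

/-- `des(π) = |{i ∈ {1,…,n-1} : π(i) > π(i+1)}|`. -/
def desNum {n : ℕ} (π : Equiv.Perm (Fin n)) : ℕ :=
  ((Finset.Icc 1 (n - 1)).filter (fun i => oneLine π (i + 1) < oneLine π i)).card

/-- `asc(π) = |{i ∈ {1,…,n-1} : π(i) < π(i+1)}|`. -/
def ascNum {n : ℕ} (π : Equiv.Perm (Fin n)) : ℕ :=
  ((Finset.Icc 1 (n - 1)).filter (fun i => oneLine π i < oneLine π (i + 1))).card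

/-- `inv(π) = |{(i,j) : 1 ≤ i < j ≤ n, π(i) > π(j)}|`. -/
def invNum {n : ℕ} (π : Equiv.Perm (Fin n)) : ℕ :=
  (((Finset.Icc 1 n) ×ˢ (Finset.Icc 1 n)).filter
    (fun p : ℕ × ℕ => p.1 < p.2 ∧ oneLine π p.2 < oneLine π p.1)).card

namespace Stmt1Aux

open Equiv Equiv.Perm Finset

variable {n : ℕ}

/-- The "next letter" permutation: `NN π v` is the letter following `v` in the
one-line word of `π` (cyclically). -/
def NN (π : Equiv.Perm (Fin (n+1))) : Equiv.Perm (Fin (n+1)) :=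
  (π.symm.trans (Equiv.addRight (1 : Fin (n+1)))).trans π

lemma NN_apply (π : Equiv.Perm (Fin (n+1))) (x : Fin (n+1)) :
    NN π x = π (π.symm x + 1) := rfl

lemma NN_symm_apply (π : Equiv.Perm (Fin (n+1))) (v : Fin (n+1)) :
    (NN π).symm v = π (π.symm v - 1) := by
  simp [NN, Equiv.symm_trans_apply, Equiv.addRight, sub_eq_add_neg]

lemma symm_NN (π : Equiv.Perm (Fin (n+1))) (v : Fin (n+1)) :
    π.symm (NN π v) = π.symm v + 1 := by
  rw [NN_apply, Equiv.symm_apply_apply]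

lemma symm_NN_symm (π : Equiv.Perm (Fin (n+1))) (v : Fin (n+1)) :
    π.symm ((NN π).symm v) = π.symm v - 1 := by
  rw [NN_symm_apply, Equiv.symm_apply_apply]

/-- `v` is a cut letter: it occurs after the letter `n` (the largest value) in the
one-line word and is smaller than every letter strictly between `n` and itself. -/
def isCut (π : Equiv.Perm (Fin (n+1))) (v : Fin (n+1)) : Prop :=
  π.symm (Fin.last n) < π.symm v ∧
    ∀ u, π.symm (Fin.last n) < π.symm u → π.symm u < π.symm v → v < u

instance (π : Equiv.Perm (Fin (n+1))) : DecidablePred (isCut π) := fun v => by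
  unfold isCut; infer_instance

def cuts (π : Equiv.Perm (Fin (n+1))) : Finset (Fin (n+1)) :=
  Finset.univ.filter (isCut π)

lemma mem_cuts {π : Equiv.Perm (Fin (n+1))} {v : Fin (n+1)} :
    v ∈ cuts π ↔ isCut π v := by simp [cuts]

lemma cut_post {π : Equiv.Perm (Fin (n+1))} {v : Fin (n+1)} (h : v ∈ cuts π) :
    π.symm (Fin.last n) < π.symm v := (mem_cuts.mp h).1

lemma cut_pos_ne_zero {π : Equiv.Perm (Fin (n+1))} {v : Fin (n+1)} (h : v ∈ cuts π) :
    π.symm v ≠ 0 := by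
  have := cut_post h
  intro h0
  rw [h0] at this
  exact absurd this (by simp [Fin.le_def])

lemma cut_ne_pi0 {π : Equiv.Perm (Fin (n+1))} {v : Fin (n+1)} (h : v ∈ cuts π) :
    v ≠ π 0 := by
  intro hv
  exact cut_pos_ne_zero h (by rw [hv, Equiv.symm_apply_apply])

lemma cut_ne_last {π : Equiv.Perm (Fin (n+1))} {v : Fin (n+1)} (h : v ∈ cuts π) :
    v ≠ Fin.last n := by
  intro hv
  have := cut_post h
  rw [hv] at this
  exact lt_irrefl _ this

lemma cuts_anti {π : Equiv.Perm (Fin (n+1))} {v w : Fin (n+1)} (hv : v ∈ cuts π)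
    (hw : w ∈ cuts π) (h : π.symm v < π.symm w) : w < v :=
  (mem_cuts.mp hw).2 v (cut_post hv) h

/-- Every letter after the top letter is bounded below by some cut occurring
(weakly) before it. -/
lemma seg_lb {π : Equiv.Perm (Fin (n+1))} :
    ∀ v : Fin (n+1), π.symm (Fin.last n) < π.symm v →
      ∃ w ∈ cuts π, π.symm w ≤ π.symm v ∧ w ≤ v := by
  suffices H : ∀ k : ℕ, ∀ v : Fin (n+1), (π.symm v).val = k →
      π.symm (Fin.last n) < π.symm v → ∃ w ∈ cuts π, π.symm w ≤ π.symm v ∧ w ≤ v by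
    intro v hv; exact H (π.symm v).val v rfl hv
  intro k
  induction k using Nat.strong_induction_on with
  | _ k IH =>
    intro v hk hv
    by_cases hc : v ∈ cuts π
    · exact ⟨v, hc, le_refl _, le_refl _⟩
    · have : ¬ isCut π v := fun h => hc (mem_cuts.mpr h)
      unfold isCut at this
      push_neg at this
      obtain ⟨u, hu1, hu2, hu3⟩ := this hv
      have huv : u ≠ v := by
        intro h; rw [h] at hu2; exact lt_irrefl _ hu2
      have hulv : u < v := lt_of_le_of_ne hu3 huv
      have hlt : (π.symm u).val < k := by
        subst hk; exact hu2
      obtain ⟨w, hw, hw1, hw2⟩ := IH (π.symm u).val hlt u rfl hu1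
      exact ⟨w, hw, le_trans hw1 (le_of_lt hu2), le_trans hw2 (le_of_lt hulv)⟩

end Stmt1Aux
namespace Stmt1Aux

variable {n : ℕ}

lemma fin_add_one_eq_zero_iff (j : Fin (n+1)) : j + 1 = 0 ↔ j = Fin.last n := by
  constructor
  · intro h
    by_contra hne
    have := Fin.val_add_one_of_lt (Fin.lt_last_iff_ne_last.mpr hne)
    rw [h] at this
    simp at this
  · intro h; rw [h]; exact Fin.last_add_one n

lemma firstPost_cut {π : Equiv.Perm (Fin (n+1))}
    (hT : π.symm (Fin.last n) ≠ Fin.last n) : NN π (Fin.last n) ∈ cuts π := by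
  have hTlt : π.symm (Fin.last n) < Fin.last n := lt_of_le_of_ne (Fin.le_last _) hT
  have hpos : π.symm (NN π (Fin.last n)) = π.symm (Fin.last n) + 1 := symm_NN π _
  have hval : (π.symm (Fin.last n) + 1).val = (π.symm (Fin.last n)).val + 1 :=
    Fin.val_add_one_of_lt hTlt
  rw [mem_cuts]
  constructor
  · rw [hpos, Fin.lt_def, hval]; omega
  · intro u hu1 hu2
    rw [hpos, Fin.lt_def, hval] at hu2
    rw [Fin.lt_def] at hu1
    omega

lemma cuts_empty_top_last {π : Equiv.Perm (Fin (n+1))} (h : cuts π = ∅) :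
    π.symm (Fin.last n) = Fin.last n := by
  by_contra hT
  have := firstPost_cut hT
  rw [h] at this
  exact absurd this (Finset.notMem_empty _)

lemma firstPost_eq_pi0 {π : Equiv.Perm (Fin (n+1))} (h : cuts π = ∅) :
    NN π (Fin.last n) = π 0 := by
  rw [NN_apply, cuts_empty_top_last h, Fin.last_add_one]

lemma firstPost_max {π : Equiv.Perm (Fin (n+1))} (h : (cuts π).Nonempty) :
    NN π (Fin.last n) ∈ cuts π ∧ ∀ w ∈ cuts π, w ≤ NN π (Fin.last n) := by
  obtain ⟨w₀, hw₀⟩ := h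
  have hT : π.symm (Fin.last n) ≠ Fin.last n := by
    intro hT
    have := cut_post hw₀
    rw [hT] at this
    exact absurd (Fin.le_last (π.symm w₀)) (not_le.mpr this)
  have hfc := firstPost_cut hT
  refine ⟨hfc, fun w hw => ?_⟩
  have hpos : π.symm (NN π (Fin.last n)) = π.symm (Fin.last n) + 1 := symm_NN π _
  have hval : (π.symm (Fin.last n) + 1).val = (π.symm (Fin.last n)).val + 1 :=
    Fin.val_add_one_of_lt (lt_of_le_of_ne (Fin.le_last _) hT)
  have hwpost := cut_post hw
  rw [Fin.lt_def] at hwpost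
  rcases lt_trichotomy (π.symm (NN π (Fin.last n))) (π.symm w) with h1 | h1 | h1
  · exact le_of_lt (cuts_anti hfc hw h1)
  · have : NN π (Fin.last n) = w := π.symm.injective h1
    rw [this]
  · exfalso
    rw [Fin.lt_def, hpos, hval] at h1
    omega

def minCut (π : Equiv.Perm (Fin (n+1))) : Fin (n+1) :=
  if h : (cuts π).Nonempty then (cuts π).min' h else π 0

def nextCut (π : Equiv.Perm (Fin (n+1))) (v : Fin (n+1)) : Fin (n+1) :=
  if h : ((cuts π).filter (fun w => v < w)).Nonempty
  then ((cuts π).filter (fun w => v < w)).min' h else π 0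

def rhoFun (π : Equiv.Perm (Fin (n+1))) (x : Fin (n+1)) : Fin (n+1) :=
  if x = Fin.last n then π 0
  else if NN π x ∈ cuts π then nextCut π (NN π x)
  else if NN π x = π 0 then minCut π
  else NN π x

lemma rho_last (π : Equiv.Perm (Fin (n+1))) : rhoFun π (Fin.last n) = π 0 :=
  if_pos rfl

/-- Branch 2 facts. -/
lemma rho_nn_cut_spec {π : Equiv.Perm (Fin (n+1))} {x : Fin (n+1)}
    (hx : x ≠ Fin.last n) (h : NN π x ∈ cuts π) :
    rhoFun π x ∈ cuts π ∧ rhoFun π x ≤ x ∧ NN π x < rhoFun π x ∧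
      (∀ w ∈ cuts π, NN π x < w → rhoFun π x ≤ w) := by
  -- position of x
  have hposNN : π.symm (NN π x) = π.symm x + 1 := symm_NN π x
  have hxlast : π.symm x ≠ Fin.last n := by
    intro hl
    have : NN π x = π 0 := by
      rw [NN_apply, hl, Fin.last_add_one]
    exact cut_ne_pi0 h this
  have hval : (π.symm x + 1).val = (π.symm x).val + 1 :=
    Fin.val_add_one_of_lt (Fin.lt_last_iff_ne_last.mpr hxlast)
  have hpostNN := cut_post h
  rw [hposNN, Fin.lt_def, hval] at hpostNN
  have hpostx : π.symm (Fin.last n) < π.symm x := by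
    rw [Fin.lt_def]
    rcases Nat.lt_or_ge (π.symm (Fin.last n)).val (π.symm x).val with h1 | h1
    · exact h1
    · exfalso
      have : (π.symm (Fin.last n)).val = (π.symm x).val := by omega
      have : π.symm (Fin.last n) = π.symm x := Fin.ext this
      exact hx (π.injective (by
        rw [← Equiv.apply_symm_apply π x, ← this, Equiv.apply_symm_apply]))
  obtain ⟨wlb, hwlb, hwlb1, hwlb2⟩ := seg_lb x hpostx
  have hwlbf : wlb ∈ (cuts π).filter (fun w => NN π x < w) := by
    rw [Finset.mem_filter]
    refine ⟨hwlb, cuts_anti hwlb h ?_⟩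
    rw [hposNN, Fin.lt_def, hval]
    rw [Fin.le_def] at hwlb1
    omega
  have hne : ((cuts π).filter (fun w => NN π x < w)).Nonempty := ⟨wlb, hwlbf⟩
  have hrho : rhoFun π x = ((cuts π).filter (fun w => NN π x < w)).min' hne := by
    unfold rhoFun
    rw [if_neg hx, if_pos h]
    unfold nextCut
    rw [dif_pos hne]
  have hmem := Finset.min'_mem _ hne
  rw [← hrho] at hmem
  rw [Finset.mem_filter] at hmem
  refine ⟨hmem.1, ?_, hmem.2, ?_⟩
  · calc rhoFun π x ≤ wlb := by rw [hrho]; exact Finset.min'_le _ _ hwlbf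
    _ ≤ x := hwlb2
  · intro w hw hlt
    rw [hrho]
    exact Finset.min'_le _ _ (Finset.mem_filter.mpr ⟨hw, hlt⟩)

/-- Branch 3 facts. -/
lemma rho_lastletter_spec {π : Equiv.Perm (Fin (n+1))} {x : Fin (n+1)}
    (hx : x ≠ Fin.last n) (h2 : NN π x ∉ cuts π) (h3 : NN π x = π 0) :
    (cuts π).Nonempty ∧ rhoFun π x ∈ cuts π ∧ rhoFun π x ≤ x ∧
      (∀ w ∈ cuts π, rhoFun π x ≤ w) := by
  have hxl : π.symm x = Fin.last n := by
    rw [NN_apply] at h3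
    have := π.injective h3
    rwa [fin_add_one_eq_zero_iff] at this
  have hpostx : π.symm (Fin.last n) < π.symm x := by
    rw [hxl]
    refine lt_of_le_of_ne (Fin.le_last _) ?_
    intro hT
    exact hx (π.symm.injective (hxl.trans hT.symm))
  obtain ⟨wlb, hwlb, _, hwlb2⟩ := seg_lb x hpostx
  have hne : (cuts π).Nonempty := ⟨wlb, hwlb⟩
  have hrho : rhoFun π x = (cuts π).min' hne := by
    unfold rhoFun
    rw [if_neg hx, if_neg h2, if_pos h3]
    unfold minCut
    rw [dif_pos hne]
  refine ⟨hne, by rw [hrho]; exact Finset.min'_mem _ hne, ?_, ?_⟩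
  · calc rhoFun π x ≤ wlb := by rw [hrho]; exact Finset.min'_le _ _ hwlb
    _ ≤ x := hwlb2
  · intro w hw; rw [hrho]; exact Finset.min'_le _ _ hw

lemma rho_other {π : Equiv.Perm (Fin (n+1))} {x : Fin (n+1)}
    (hx : x ≠ Fin.last n) (h2 : NN π x ∉ cuts π) (h3 : NN π x ≠ π 0) :
    rhoFun π x = NN π x := by
  unfold rhoFun
  rw [if_neg hx, if_neg h2, if_neg h3]

lemma rho_inj (π : Equiv.Perm (Fin (n+1))) : Function.Injective (rhoFun π) := by
  intro x y h
  by_cases hx : x = Fin.last n <;> by_cases hy : y = Fin.last n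
  · rw [hx, hy]
  all_goals (try subst hx) <;> (try subst hy)
  -- case x = last, y ≠ last
  · exfalso
    rw [rho_last] at h
    by_cases h2 : NN π y ∈ cuts π
    · have := (rho_nn_cut_spec hy h2).1
      rw [← h] at this
      exact cut_ne_pi0 this rfl
    · by_cases h3 : NN π y = π 0
      · have := (rho_lastletter_spec hy h2 h3).2.1
        rw [← h] at this
        exact cut_ne_pi0 this rfl
      · rw [rho_other hy h2 h3] at h
        exact h3 h.symm
  -- case x ≠ last, y = last
  · exfalso
    rw [rho_last] at h
    by_cases h2 : NN π x ∈ cuts π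
    · have := (rho_nn_cut_spec hx h2).1
      rw [h] at this
      exact cut_ne_pi0 this rfl
    · by_cases h3 : NN π x = π 0
      · have := (rho_lastletter_spec hx h2 h3).2.1
        rw [h] at this
        exact cut_ne_pi0 this rfl
      · rw [rho_other hx h2 h3] at h
        exact h3 h
  -- both ≠ last
  · by_cases h2x : NN π x ∈ cuts π <;> by_cases h2y : NN π y ∈ cuts π
    · -- b2 b2
      obtain ⟨hcx, _, hltx, hminx⟩ := rho_nn_cut_spec hx h2x
      obtain ⟨hcy, _, hlty, hminy⟩ := rho_nn_cut_spec hy h2y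
      have : NN π x = NN π y := by
        rcases lt_trichotomy (NN π x) (NN π y) with h1 | h1 | h1
        · exfalso
          have := hminx _ h2y h1
          rw [h] at this
          exact absurd hlty (not_lt.mpr this)
        · exact h1
        · exfalso
          have := hminy _ h2x h1
          rw [← h] at this
          exact absurd hltx (not_lt.mpr this)
      exact (NN π).injective this
    · -- x b2, y b3 or b4
      by_cases h3y : NN π y = π 0
      · exfalso
        obtain ⟨hcx, _, hltx, _⟩ := rho_nn_cut_spec hx h2x
        obtain ⟨_, _, _, hminy⟩ := rho_lastletter_spec hy h2y h3y
        have := hminy _ h2x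
        rw [← h] at this
        exact absurd hltx (not_lt.mpr this)
      · exfalso
        rw [rho_other hy h2y h3y] at h
        have := (rho_nn_cut_spec hx h2x).1
        rw [h] at this
        exact h2y this
    · -- x b3 or b4, y b2
      by_cases h3x : NN π x = π 0
      · exfalso
        obtain ⟨hcy, _, hlty, _⟩ := rho_nn_cut_spec hy h2y
        obtain ⟨_, _, _, hminx⟩ := rho_lastletter_spec hx h2x h3x
        have := hminx _ h2y
        rw [h] at this
        exact absurd hlty (not_lt.mpr this)
      · exfalso
        rw [rho_other hx h2x h3x] at h
        have := (rho_nn_cut_spec hy h2y).1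
        rw [← h] at this
        exact h2x this
    · by_cases h3x : NN π x = π 0 <;> by_cases h3y : NN π y = π 0
      · -- b3 b3
        exact (NN π).injective (h3x.trans h3y.symm)
      · exfalso
        rw [rho_other hy h2y h3y] at h
        have := (rho_lastletter_spec hx h2x h3x).2.1
        rw [h] at this
        exact h2y this
      · exfalso
        rw [rho_other hx h2x h3x] at h
        have := (rho_lastletter_spec hy h2y h3y).2.1
        rw [← h] at this
        exact h2x this
      · rw [rho_other hx h2x h3x, rho_other hy h2y h3y] at h
        exact (NN π).injective h

noncomputable def rho (π : Equiv.Perm (Fin (n+1))) : Equiv.Perm (Fin (n+1)) :=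
  Equiv.ofBijective (rhoFun π) (Finite.injective_iff_bijective.mp (rho_inj π))

lemma rho_apply (π : Equiv.Perm (Fin (n+1))) (x : Fin (n+1)) :
    rho π x = rhoFun π x := rfl

noncomputable def Psi (π : Equiv.Perm (Fin (n+1))) : Equiv.Perm (Fin (n+1)) :=
  (Equiv.subRight (1 : Fin (n+1))).trans (rho π)

lemma Psi_apply (π : Equiv.Perm (Fin (n+1))) (x : Fin (n+1)) :
    Psi π x = rhoFun π (x - 1) := rfl

end Stmt1Aux
namespace Stmt1Aux

variable {n : ℕ}

lemma rho_symm_pi0 (π : Equiv.Perm (Fin (n+1))) : (rho π).symm (π 0) = Fin.last n := by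
  have : rho π (Fin.last n) = π 0 := rho_last π
  rw [← this, Equiv.symm_apply_apply]

lemma rho_symm_cut {π : Equiv.Perm (Fin (n+1))} {w : Fin (n+1)} (hw : w ∈ cuts π) :
    (rho π).symm w ≠ Fin.last n ∧ w ≤ (rho π).symm w := by
  set x := (rho π).symm w with hxdef
  have hx : rhoFun π x = w := Equiv.apply_symm_apply (rho π) w
  have hxl : x ≠ Fin.last n := by
    intro h
    rw [h, rho_last] at hx
    exact cut_ne_pi0 hw hx.symm
  refine ⟨hxl, ?_⟩
  by_cases h2 : NN π x ∈ cuts π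
  · have := (rho_nn_cut_spec hxl h2).2.1
    rw [hx] at this
    exact this
  · by_cases h3 : NN π x = π 0
    · have := (rho_lastletter_spec hxl h2 h3).2.2.1
      rw [hx] at this
      exact this
    · exfalso
      rw [rho_other hxl h2 h3] at hx
      rw [← hx] at hw
      exact h2 hw

lemma rho_symm_other {π : Equiv.Perm (Fin (n+1))} {v : Fin (n+1)}
    (hv1 : v ∉ cuts π) (hv2 : v ≠ π 0) : (rho π).symm v = (NN π).symm v := by
  set x := (rho π).symm v with hxdef
  have hx : rhoFun π x = v := Equiv.apply_symm_apply (rho π) v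
  have hxl : x ≠ Fin.last n := by
    intro h
    rw [h, rho_last] at hx
    exact hv2 hx.symm
  by_cases h2 : NN π x ∈ cuts π
  · exfalso
    have := (rho_nn_cut_spec hxl h2).1
    rw [hx] at this
    exact hv1 this
  · by_cases h3 : NN π x = π 0
    · exfalso
      have := (rho_lastletter_spec hxl h2 h3).2.1
      rw [hx] at this
      exact hv1 this
    · rw [rho_other hxl h2 h3] at hx
      rw [← hx, Equiv.symm_apply_apply]

lemma cut_lt_prev {π : Equiv.Perm (Fin (n+1))} {v : Fin (n+1)} (hv : v ∈ cuts π) :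
    v < (NN π).symm v := by
  set Ns := (NN π).symm v with hNs
  have hpos : π.symm Ns = π.symm v - 1 := symm_NN_symm π v
  have hv0 : π.symm v ≠ 0 := cut_pos_ne_zero hv
  have hval : (π.symm v - 1).val = (π.symm v).val - 1 := by
    rw [Fin.coe_sub_one, if_neg hv0]
  have hvpost := cut_post hv
  by_cases hT : π.symm Ns = π.symm (Fin.last n)
  · have : Ns = Fin.last n := π.symm.injective hT
    rw [this]
    exact Fin.lt_last_iff_ne_last.mpr (cut_ne_last hv)
  · have h1 : π.symm (Fin.last n) < π.symm Ns := by
      rw [Fin.lt_def] at hvpost ⊢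
      rw [hpos, hval]
      rcases Nat.lt_or_ge ((π.symm (Fin.last n)).val) ((π.symm v).val - 1) with h | h
      · exact h
      · exfalso
        apply hT
        apply Fin.ext
        rw [hpos, hval]
        have : (π.symm v).val ≠ 0 := fun h0 => hv0 (Fin.ext h0)
        omega
    have h2 : π.symm Ns < π.symm v := by
      rw [Fin.lt_def, hpos, hval]
      have : (π.symm v).val ≠ 0 := fun h0 => hv0 (Fin.ext h0)
      omega
    exact (mem_cuts.mp hv).2 Ns h1 h2

lemma nn_symm_ne_self {π : Equiv.Perm (Fin (n+1))} {v : Fin (n+1)}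
    (hv2 : v ≠ π 0) : (NN π).symm v ≠ v := by
  intro h
  have hpos : π.symm ((NN π).symm v) = π.symm v - 1 := symm_NN_symm π v
  rw [h] at hpos
  have : (1 : Fin (n+1)) = 0 := by
    have := sub_eq_self.mp hpos.symm
    exact this
  have hn0 : n = 0 := by
    have := congrArg Fin.val this
    simp [Fin.val_one', Fin.val_zero] at this
    omega
  subst hn0
  apply hv2
  have h1 : v = 0 := Fin.fin_one_eq_zero v
  have h2 : π 0 = 0 := Fin.fin_one_eq_zero _
  rw [h1, h2]

lemma nn_symm_ne_last {π : Equiv.Perm (Fin (n+1))} {v : Fin (n+1)}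
    (hv1 : v ∉ cuts π) (hv2 : v ≠ π 0) : (NN π).symm v ≠ Fin.last n := by
  intro h
  have : NN π (Fin.last n) = v := by rw [← h, Equiv.apply_symm_apply]
  by_cases hc : (cuts π).Nonempty
  · exact hv1 (this ▸ (firstPost_max hc).1)
  · rw [Finset.not_nonempty_iff_eq_empty] at hc
    exact hv2 ((this ▸ firstPost_eq_pi0 hc) : v = π 0)

lemma pi_symm_ne_zero {π : Equiv.Perm (Fin (n+1))} {v : Fin (n+1)}
    (hv2 : v ≠ π 0) : π.symm v ≠ 0 := by
  intro h
  exact hv2 (by rw [← Equiv.apply_symm_apply π v, h])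

lemma main_E (π : Equiv.Perm (Fin (n+1))) (v : Fin (n+1)) :
    ((rho π).symm v ≠ Fin.last n ∧ ((rho π).symm v).val + 2 ≤ v.val) ↔
      (π.symm v ≠ 0 ∧ (((NN π).symm v).val + 2 ≤ v.val)) := by
  by_cases hv2 : v = π 0
  · subst hv2
    rw [rho_symm_pi0]
    simp
  by_cases hv1 : v ∈ cuts π
  · obtain ⟨_, hle⟩ := rho_symm_cut hv1
    have hlt := cut_lt_prev hv1
    rw [Fin.le_def] at hle
    rw [Fin.lt_def] at hlt
    constructor
    · rintro ⟨_, h⟩; omega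
    · rintro ⟨_, h⟩; omega
  · rw [rho_symm_other hv1 hv2]
    simp only [nn_symm_ne_last hv1 hv2, pi_symm_ne_zero hv2, ne_eq,
      not_false_eq_true, true_and]

lemma main_A (π : Equiv.Perm (Fin (n+1))) (v : Fin (n+1)) :
    ((rho π).symm v ≠ Fin.last n ∧ v ≤ (rho π).symm v) ↔
      (π.symm v ≠ 0 ∧ v < (NN π).symm v) := by
  by_cases hv2 : v = π 0
  · subst hv2
    rw [rho_symm_pi0]
    simp
  by_cases hv1 : v ∈ cuts π
  · obtain ⟨hne, hle⟩ := rho_symm_cut hv1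
    have hlt := cut_lt_prev hv1
    exact ⟨fun _ => ⟨pi_symm_ne_zero hv2, hlt⟩, fun _ => ⟨hne, hle⟩⟩
  · rw [rho_symm_other hv1 hv2]
    have hne := nn_symm_ne_self hv2
    constructor
    · rintro ⟨_, h⟩
      exact ⟨pi_symm_ne_zero hv2, lt_of_le_of_ne h (fun hh => hne hh.symm)⟩
    · rintro ⟨_, h⟩
      exact ⟨nn_symm_ne_last hv1 hv2, le_of_lt h⟩

lemma main_F (π : Equiv.Perm (Fin (n+1))) (v : Fin (n+1)) :
    ((rho π).symm v ≠ Fin.last n ∧ ((rho π).symm v).val + 1 = v.val) ↔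
      (π.symm v ≠ 0 ∧ (((NN π).symm v).val + 1 = v.val)) := by
  by_cases hv2 : v = π 0
  · subst hv2
    rw [rho_symm_pi0]
    simp
  by_cases hv1 : v ∈ cuts π
  · obtain ⟨_, hle⟩ := rho_symm_cut hv1
    have hlt := cut_lt_prev hv1
    rw [Fin.le_def] at hle
    rw [Fin.lt_def] at hlt
    constructor
    · rintro ⟨_, h⟩; omega
    · rintro ⟨_, h⟩; omega
  · rw [rho_symm_other hv1 hv2]
    simp only [nn_symm_ne_last hv1 hv2, pi_symm_ne_zero hv2, ne_eq,
      not_false_eq_true, true_and]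

end Stmt1Aux
namespace Stmt1Aux

variable {n : ℕ}

lemma oneLine_pos' (π : Equiv.Perm (Fin (n+1))) (j : ℕ) (hj : j < n+1) :
    oneLine π (j + 1) = (π ⟨j, hj⟩).val + 1 := by
  unfold oneLine
  rw [dif_pos (by omega : j + 1 - 1 < n + 1)]
  congr

lemma mem_Asc2_iff (π : Equiv.Perm (Fin (n+1))) (a : ℕ) :
    a ∈ Asc2 π ↔
      ∃ v : Fin (n+1), (π.symm v ≠ 0 ∧ ((NN π).symm v).val + 2 ≤ v.val) ∧ v.val + 1 = a := by
  unfold Asc2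
  rw [Finset.mem_image]
  simp only [Finset.mem_filter, Finset.mem_Icc, Nat.add_sub_cancel]
  constructor
  · rintro ⟨i, ⟨⟨hi1, hi2⟩, hcond⟩, ha⟩
    have hilt : i < n + 1 := by omega
    have hilt' : i - 1 < n + 1 := by omega
    have c0 := oneLine_pos' π (i-1) hilt'
    rw [show i - 1 + 1 = i from by omega] at c0
    have c1 := oneLine_pos' π i hilt
    have hNs : (NN π).symm (π ⟨i, hilt⟩) = π ⟨i-1, hilt'⟩ := by
      rw [NN_symm_apply, Equiv.symm_apply_apply]
      congr 1
      apply Fin.ext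
      rw [Fin.coe_sub_one, if_neg]
      intro h
      have := congrArg Fin.val h
      simp at this
      omega
    refine ⟨π ⟨i, hilt⟩, ⟨?_, ?_⟩, ?_⟩
    · rw [Equiv.symm_apply_apply]
      intro h
      have := congrArg Fin.val h
      simp at this
      omega
    · rw [hNs]
      rw [c0, c1] at hcond
      omega
    · rw [c1] at ha
      omega
  · rintro ⟨v, ⟨hv0, hcond⟩, ha⟩
    have hv0' : (π.symm v).val ≠ 0 := fun h => hv0 (Fin.ext h)
    have hvlt : (π.symm v).val < n + 1 := (π.symm v).isLt
    have hp1 : (π.symm v).val - 1 < n + 1 := by omega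
    have e2 : π (⟨(π.symm v).val - 1, hp1⟩ : Fin (n+1)) = (NN π).symm v := by
      rw [NN_symm_apply]
      congr 1
      apply Fin.ext
      rw [Fin.coe_sub_one, if_neg hv0]
    have c0 := oneLine_pos' π ((π.symm v).val - 1) hp1
    rw [show (π.symm v).val - 1 + 1 = (π.symm v).val from by omega, e2] at c0
    have c1 := oneLine_pos' π (π.symm v).val hvlt
    rw [show (⟨(π.symm v).val, hvlt⟩ : Fin (n+1)) = π.symm v from Fin.ext rfl,
      Equiv.apply_symm_apply] at c1
    refine ⟨(π.symm v).val, ⟨⟨by omega, by omega⟩, ?_⟩, ?_⟩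
    · rw [c0, c1]
      omega
    · rw [c1]
      omega

end Stmt1Aux
namespace Stmt1Aux

variable {n : ℕ}

lemma mem_DesSet_iff (π : Equiv.Perm (Fin (n+1))) (a : ℕ) :
    a ∈ DesSet π ↔
      ∃ v : Fin (n+1), (π.symm v ≠ 0 ∧ v < (NN π).symm v) ∧ v.val + 1 = a := by
  unfold DesSet
  rw [Finset.mem_image]
  simp only [Finset.mem_filter, Finset.mem_Icc, Nat.add_sub_cancel]
  constructor
  · rintro ⟨i, ⟨⟨hi1, hi2⟩, hcond⟩, ha⟩
    have hilt : i < n + 1 := by omega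
    have hilt' : i - 1 < n + 1 := by omega
    have c0 := oneLine_pos' π (i-1) hilt'
    rw [show i - 1 + 1 = i from by omega] at c0
    have c1 := oneLine_pos' π i hilt
    have hNs : (NN π).symm (π ⟨i, hilt⟩) = π ⟨i-1, hilt'⟩ := by
      rw [NN_symm_apply, Equiv.symm_apply_apply]
      congr 1
      apply Fin.ext
      rw [Fin.coe_sub_one, if_neg]
      intro h
      have := congrArg Fin.val h
      simp at this
      omega
    refine ⟨π ⟨i, hilt⟩, ⟨?_, ?_⟩, ?_⟩
    · rw [Equiv.symm_apply_apply]
      intro h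
      have := congrArg Fin.val h
      simp at this
      omega
    · rw [hNs, Fin.lt_def]
      rw [c0, c1] at hcond
      omega
    · rw [c1] at ha
      omega
  · rintro ⟨v, ⟨hv0, hcond⟩, ha⟩
    have hv0' : (π.symm v).val ≠ 0 := fun h => hv0 (Fin.ext h)
    have hvlt : (π.symm v).val < n + 1 := (π.symm v).isLt
    have hp1 : (π.symm v).val - 1 < n + 1 := by omega
    have e2 : π (⟨(π.symm v).val - 1, hp1⟩ : Fin (n+1)) = (NN π).symm v := by
      rw [NN_symm_apply]
      congr 1
      apply Fin.ext
      rw [Fin.coe_sub_one, if_neg hv0]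
    have c0 := oneLine_pos' π ((π.symm v).val - 1) hp1
    rw [show (π.symm v).val - 1 + 1 = (π.symm v).val from by omega, e2] at c0
    have c1 := oneLine_pos' π (π.symm v).val hvlt
    rw [show (⟨(π.symm v).val, hvlt⟩ : Fin (n+1)) = π.symm v from Fin.ext rfl,
      Equiv.apply_symm_apply] at c1
    rw [Fin.lt_def] at hcond
    refine ⟨(π.symm v).val, ⟨⟨by omega, by omega⟩, ?_⟩, ?_⟩
    · rw [c0, c1]
      omega
    · rw [c1]
      omega

lemma mem_SucSet_iff (π : Equiv.Perm (Fin (n+1))) (a : ℕ) :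
    a ∈ SucSet π ↔
      ∃ v : Fin (n+1), (π.symm v ≠ 0 ∧ ((NN π).symm v).val + 1 = v.val) ∧ v.val + 1 = a := by
  unfold SucSet
  rw [Finset.mem_image]
  simp only [Finset.mem_filter, Finset.mem_Icc, Nat.add_sub_cancel]
  constructor
  · rintro ⟨i, ⟨⟨hi1, hi2⟩, hcond⟩, ha⟩
    have hilt : i < n + 1 := by omega
    have hilt' : i - 1 < n + 1 := by omega
    have c0 := oneLine_pos' π (i-1) hilt'
    rw [show i - 1 + 1 = i from by omega] at c0
    have c1 := oneLine_pos' π i hilt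
    have hNs : (NN π).symm (π ⟨i, hilt⟩) = π ⟨i-1, hilt'⟩ := by
      rw [NN_symm_apply, Equiv.symm_apply_apply]
      congr 1
      apply Fin.ext
      rw [Fin.coe_sub_one, if_neg]
      intro h
      have := congrArg Fin.val h
      simp at this
      omega
    refine ⟨π ⟨i, hilt⟩, ⟨?_, ?_⟩, ?_⟩
    · rw [Equiv.symm_apply_apply]
      intro h
      have := congrArg Fin.val h
      simp at this
      omega
    · rw [hNs]
      rw [c0, c1] at hcond
      omega
    · rw [c1] at ha
      omega
  · rintro ⟨v, ⟨hv0, hcond⟩, ha⟩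
    have hv0' : (π.symm v).val ≠ 0 := fun h => hv0 (Fin.ext h)
    have hvlt : (π.symm v).val < n + 1 := (π.symm v).isLt
    have hp1 : (π.symm v).val - 1 < n + 1 := by omega
    have e2 : π (⟨(π.symm v).val - 1, hp1⟩ : Fin (n+1)) = (NN π).symm v := by
      rw [NN_symm_apply]
      congr 1
      apply Fin.ext
      rw [Fin.coe_sub_one, if_neg hv0]
    have c0 := oneLine_pos' π ((π.symm v).val - 1) hp1
    rw [show (π.symm v).val - 1 + 1 = (π.symm v).val from by omega, e2] at c0
    have c1 := oneLine_pos' π (π.symm v).val hvlt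
    rw [show (⟨(π.symm v).val, hvlt⟩ : Fin (n+1)) = π.symm v from Fin.ext rfl,
      Equiv.apply_symm_apply] at c1
    refine ⟨(π.symm v).val, ⟨⟨by omega, by omega⟩, ?_⟩, ?_⟩
    · rw [c0, c1]
      omega
    · rw [c1]
      omega

lemma oneLine_Psi (π : Equiv.Perm (Fin (n+1))) (j : ℕ) (hj : j < n) :
    oneLine (Psi π) (j + 1 + 1) = (rho π ⟨j, by omega⟩).val + 1 := by
  rw [oneLine_pos' (Psi π) (j+1) (by omega)]
  congr 2
  show rhoFun π ((⟨j+1, by omega⟩ : Fin (n+1)) - 1) = rho π ⟨j, by omega⟩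
  rw [rho_apply]
  congr 1
  apply Fin.ext
  rw [Fin.coe_sub_one, if_neg]
  · simp
  · intro h
    have := congrArg Fin.val h
    simp at this

lemma fin_ne_last_iff_val {v : Fin (n+1)} : v ≠ Fin.last n ↔ v.val < n := by
  rw [← Fin.lt_last_iff_ne_last, Fin.lt_def]
  simp

lemma mem_ExcHat_Psi_iff (π : Equiv.Perm (Fin (n+1))) (a : ℕ) :
    a ∈ ExcHat (Psi π) ↔
      ∃ v : Fin (n+1), ((rho π).symm v ≠ Fin.last n ∧ ((rho π).symm v).val + 2 ≤ v.val) ∧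
        v.val + 1 = a := by
  unfold ExcHat
  rw [Finset.mem_image]
  simp only [Finset.mem_filter, Finset.mem_Icc]
  constructor
  · rintro ⟨i, ⟨⟨hi2, hin⟩, hcond⟩, ha⟩
    have hj : i - 2 < n := by omega
    have c := oneLine_Psi π (i-2) hj
    rw [show i - 2 + 1 + 1 = i from by omega] at c
    set y : Fin (n+1) := ⟨i-2, by omega⟩ with hy
    refine ⟨rho π y, ⟨?_, ?_⟩, ?_⟩
    · rw [Equiv.symm_apply_apply, fin_ne_last_iff_val]
      exact hj
    · rw [Equiv.symm_apply_apply]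
      rw [c] at hcond
      show (i - 2) + 2 ≤ _
      omega
    · rw [c] at ha
      exact ha
  · rintro ⟨v, ⟨hv1, hcond⟩, ha⟩
    have hj : ((rho π).symm v).val < n := fin_ne_last_iff_val.mp hv1
    have c := oneLine_Psi π ((rho π).symm v).val hj
    rw [show (⟨((rho π).symm v).val, by omega⟩ : Fin (n+1)) = (rho π).symm v from
      Fin.ext rfl, Equiv.apply_symm_apply] at c
    refine ⟨((rho π).symm v).val + 1 + 1, ⟨⟨by omega, by omega⟩, ?_⟩, ?_⟩
    · rw [c]
      omega
    · rw [c]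
      omega

lemma mem_Aexc_Psi_iff (π : Equiv.Perm (Fin (n+1))) (a : ℕ) :
    a ∈ Aexc (Psi π) ↔
      ∃ v : Fin (n+1), ((rho π).symm v ≠ Fin.last n ∧ v ≤ (rho π).symm v) ∧
        v.val + 1 = a := by
  unfold Aexc
  rw [Finset.mem_image]
  simp only [Finset.mem_filter, Finset.mem_Icc]
  constructor
  · rintro ⟨i, ⟨⟨hi2, hin⟩, hcond⟩, ha⟩
    have hj : i - 2 < n := by omega
    have c := oneLine_Psi π (i-2) hj
    rw [show i - 2 + 1 + 1 = i from by omega] at c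
    set y : Fin (n+1) := ⟨i-2, by omega⟩ with hy
    refine ⟨rho π y, ⟨?_, ?_⟩, ?_⟩
    · rw [Equiv.symm_apply_apply, fin_ne_last_iff_val]
      exact hj
    · rw [Equiv.symm_apply_apply, Fin.le_def]
      rw [c] at hcond
      show _ ≤ i - 2
      omega
    · rw [c] at ha
      exact ha
  · rintro ⟨v, ⟨hv1, hcond⟩, ha⟩
    have hj : ((rho π).symm v).val < n := fin_ne_last_iff_val.mp hv1
    have c := oneLine_Psi π ((rho π).symm v).val hj
    rw [show (⟨((rho π).symm v).val, by omega⟩ : Fin (n+1)) = (rho π).symm v from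
      Fin.ext rfl, Equiv.apply_symm_apply] at c
    rw [Fin.le_def] at hcond
    refine ⟨((rho π).symm v).val + 1 + 1, ⟨⟨by omega, by omega⟩, ?_⟩, ?_⟩
    · rw [c]
      omega
    · rw [c]
      omega

lemma mem_FixHat_Psi_iff (π : Equiv.Perm (Fin (n+1))) (a : ℕ) :
    a ∈ FixHat (Psi π) ↔
      ∃ v : Fin (n+1), ((rho π).symm v ≠ Fin.last n ∧ ((rho π).symm v).val + 1 = v.val) ∧
        v.val + 1 = a := by
  unfold FixHat
  rw [Finset.mem_image]
  simp only [Finset.mem_filter, Finset.mem_Icc]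
  constructor
  · rintro ⟨i, ⟨⟨hi2, hin⟩, hcond⟩, ha⟩
    have hj : i - 2 < n := by omega
    have c := oneLine_Psi π (i-2) hj
    rw [show i - 2 + 1 + 1 = i from by omega] at c
    set y : Fin (n+1) := ⟨i-2, by omega⟩ with hy
    refine ⟨rho π y, ⟨?_, ?_⟩, ?_⟩
    · rw [Equiv.symm_apply_apply, fin_ne_last_iff_val]
      exact hj
    · rw [Equiv.symm_apply_apply]
      rw [c] at hcond
      show (i - 2) + 1 = _
      omega
    · rw [c] at ha
      exact ha
  · rintro ⟨v, ⟨hv1, hcond⟩, ha⟩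
    have hj : ((rho π).symm v).val < n := fin_ne_last_iff_val.mp hv1
    have c := oneLine_Psi π ((rho π).symm v).val hj
    rw [show (⟨((rho π).symm v).val, by omega⟩ : Fin (n+1)) = (rho π).symm v from
      Fin.ext rfl, Equiv.apply_symm_apply] at c
    refine ⟨((rho π).symm v).val + 1 + 1, ⟨⟨by omega, by omega⟩, ?_⟩, ?_⟩
    · rw [c]
      omega
    · rw [c]
      omega

/-- The statistic preservation theorem. -/
theorem stats_Psi (π : Equiv.Perm (Fin (n+1))) :
    ExcHat (Psi π) = Asc2 π ∧ Aexc (Psi π) = DesSet π ∧ FixHat (Psi π) = SucSet π := by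
  refine ⟨?_, ?_, ?_⟩
  · ext a
    rw [mem_ExcHat_Psi_iff, mem_Asc2_iff]
    exact exists_congr fun v => and_congr_left' (main_E π v)
  · ext a
    rw [mem_Aexc_Psi_iff, mem_DesSet_iff]
    exact exists_congr fun v => and_congr_left' (main_A π v)
  · ext a
    rw [mem_FixHat_Psi_iff, mem_SucSet_iff]
    exact exists_congr fun v => and_congr_left' (main_F π v)

end Stmt1Aux
namespace Stmt1Aux

variable {n : ℕ}

lemma cuts_anti' {π : Equiv.Perm (Fin (n+1))} {v w : Fin (n+1)} (hv : v ∈ cuts π)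
    (hw : w ∈ cuts π) (h : v < w) : π.symm w < π.symm v := by
  rcases lt_trichotomy (π.symm w) (π.symm v) with h1 | h1 | h1
  · exact h1
  · exact absurd (π.symm.injective h1 ▸ h) (lt_irrefl w)
  · exact absurd (cuts_anti hv hw h1) (not_lt.mpr (le_of_lt h))

def cutsBefore (π : Equiv.Perm (Fin (n+1))) (v : Fin (n+1)) : Finset (Fin (n+1)) :=
  (cuts π).filter (fun w => π.symm w ≤ π.symm v)

lemma mem_cutsBefore {π : Equiv.Perm (Fin (n+1))} {v w : Fin (n+1)} :
    w ∈ cutsBefore π v ↔ w ∈ cuts π ∧ π.symm w ≤ π.symm v := by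
  unfold cutsBefore
  exact Finset.mem_filter

lemma cutsBefore_nonempty {π : Equiv.Perm (Fin (n+1))} {v : Fin (n+1)}
    (h : π.symm (Fin.last n) < π.symm v) : (cutsBefore π v).Nonempty := by
  obtain ⟨w, hw, hw1, _⟩ := seg_lb v h
  exact ⟨w, mem_cutsBefore.mpr ⟨hw, hw1⟩⟩

def scut (π : Equiv.Perm (Fin (n+1))) (v : Fin (n+1)) : Fin (n+1) :=
  if h : (cutsBefore π v).Nonempty then (cutsBefore π v).min' h else π 0

lemma scut_spec {π : Equiv.Perm (Fin (n+1))} {v : Fin (n+1)}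
    (h : π.symm (Fin.last n) < π.symm v) :
    scut π v ∈ cuts π ∧ π.symm (scut π v) ≤ π.symm v ∧ scut π v ≤ v ∧
      ∀ w ∈ cuts π, π.symm w ≤ π.symm v → scut π v ≤ w := by
  have hne := cutsBefore_nonempty h
  have hd : scut π v = (cutsBefore π v).min' hne := dif_pos hne
  have hmem := Finset.min'_mem _ hne
  rw [← hd] at hmem
  rw [mem_cutsBefore] at hmem
  obtain ⟨wlb, hwlb, hwlb1, hwlb2⟩ := seg_lb v h
  refine ⟨hmem.1, hmem.2, ?_, ?_⟩
  · calc scut π v ≤ wlb := by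
          rw [hd]
          exact Finset.min'_le (cutsBefore π v) wlb (mem_cutsBefore.mpr ⟨hwlb, hwlb1⟩)
    _ ≤ v := hwlb2
  · intro w hw hw1
    rw [hd]
    exact Finset.min'_le (cutsBefore π v) w (mem_cutsBefore.mpr ⟨hw, hw1⟩)

lemma scut_of_cut {π : Equiv.Perm (Fin (n+1))} {w : Fin (n+1)} (hw : w ∈ cuts π) :
    scut π w = w := by
  have hpost := cut_post hw
  obtain ⟨h1, h2, h3, h4⟩ := scut_spec hpost
  refine le_antisymm h3 ?_
  rcases lt_trichotomy (π.symm (scut π w)) (π.symm w) with hh | hh | hh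
  · exact le_of_lt (cuts_anti h1 hw hh)
  · exact le_of_eq (π.symm.injective hh).symm
  · exact absurd h2 (not_le.mpr hh)

lemma post_step {π : Equiv.Perm (Fin (n+1))} {v : Fin (n+1)}
    (h : π.symm (Fin.last n) < π.symm v) :
    π.symm (Fin.last n) < π.symm (rhoFun π v) ∧ scut π (rhoFun π v) = scut π v ∧
      (rhoFun π v = scut π v ∨ (π.symm (rhoFun π v)).val = (π.symm v).val + 1) := by
  have hvlast : v ≠ Fin.last n := by
    intro hv; rw [hv] at h; exact lt_irrefl _ h
  obtain ⟨hs1, hs2, hs3, hs4⟩ := scut_spec h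
  by_cases h2 : NN π v ∈ cuts π
  · -- branch 2 : rho v = scut v
    obtain ⟨hc, hle, hlt, hmin⟩ := rho_nn_cut_spec hvlast h2
    have hvposlast : π.symm v ≠ Fin.last n := by
      intro hl
      exact cut_ne_pi0 h2 (by rw [NN_apply, hl, Fin.last_add_one])
    have hval : (π.symm v + 1).val = (π.symm v).val + 1 :=
      Fin.val_add_one_of_lt (Fin.lt_last_iff_ne_last.mpr hvposlast)
    have hNNpos : π.symm (NN π v) = π.symm v + 1 := symm_NN π v
    have heq : rhoFun π v = scut π v := by
      refine le_antisymm (hmin _ hs1 ?_) ?_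
      · -- NN π v < scut π v
        apply cuts_anti hs1 h2
        rw [hNNpos, Fin.lt_def, hval]
        rw [Fin.le_def] at hs2
        omega
      · -- scut π v ≤ rho v : pos (rho v) ≤ pos v
        apply hs4 _ hc
        have := cuts_anti' h2 hc hlt
        rw [hNNpos, Fin.lt_def, hval] at this
        rw [Fin.le_def]
        omega
    rw [heq, scut_of_cut hs1]
    exact ⟨cut_post hs1, rfl, Or.inl rfl⟩
  · by_cases h3 : NN π v = π 0
    · -- branch 3
      obtain ⟨hne, hc, hle, hmin⟩ := rho_lastletter_spec hvlast h2 h3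
      have heq : rhoFun π v = scut π v := by
        refine le_antisymm (hmin _ hs1) (hs4 _ hc ?_)
        -- pos (rho v) ≤ pos v; pos v = last
        have hvl : π.symm v = Fin.last n := by
          rw [NN_apply] at h3
          have := π.injective h3
          rwa [fin_add_one_eq_zero_iff] at this
        rw [hvl]
        exact Fin.le_last _
      rw [heq, scut_of_cut hs1]
      exact ⟨cut_post hs1, rfl, Or.inl rfl⟩
    · -- branch 4
      have heq : rhoFun π v = NN π v := rho_other hvlast h2 h3
      have hvposlast : π.symm v ≠ Fin.last n := by
        intro hl
        exact h3 (by rw [NN_apply, hl, Fin.last_add_one])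
      have hval : (π.symm v + 1).val = (π.symm v).val + 1 :=
        Fin.val_add_one_of_lt (Fin.lt_last_iff_ne_last.mpr hvposlast)
      have hNNpos : π.symm (NN π v) = π.symm v + 1 := symm_NN π v
      have hpost' : π.symm (Fin.last n) < π.symm (NN π v) := by
        rw [hNNpos, Fin.lt_def, hval]
        rw [Fin.lt_def] at h
        omega
      obtain ⟨ht1, ht2, ht3, ht4⟩ := scut_spec hpost'
      have heq2 : scut π (NN π v) = scut π v := by
        refine le_antisymm (ht4 _ hs1 ?_) (hs4 _ ht1 ?_)
        · rw [Fin.le_def] at hs2 ⊢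
          rw [hNNpos, hval]
          omega
        · -- pos (scut (NN v)) ≤ pos v
          rw [Fin.le_def] at ht2 ⊢
          rw [hNNpos, hval] at ht2
          rcases Nat.lt_or_ge (π.symm (scut π (NN π v))).val ((π.symm v).val + 1)
            with hh | hh
          · omega
          · exfalso
            have : π.symm (scut π (NN π v)) = π.symm (NN π v) := by
              apply Fin.ext
              rw [hNNpos, hval]
              omega
            have := π.symm.injective this
            rw [this] at ht1
            exact h2 ht1
      rw [heq]
      exact ⟨hpost', heq2, Or.inr (by rw [hNNpos, hval])⟩

lemma post_pow {π : Equiv.Perm (Fin (n+1))} {v : Fin (n+1)}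
    (h : π.symm (Fin.last n) < π.symm v) (k : ℕ) :
    π.symm (Fin.last n) < π.symm (((rho π)^k) v) ∧
      scut π (((rho π)^k) v) = scut π v := by
  induction k with
  | zero =>
    simp only [pow_zero, Equiv.Perm.one_apply]
    exact ⟨h, trivial⟩
  | succ k IH =>
    have : ((rho π)^(k+1)) v = rho π (((rho π)^k) v) := by
      rw [pow_succ', Equiv.Perm.mul_apply]
    rw [this]
    obtain ⟨IH1, IH2⟩ := IH
    obtain ⟨a, b, _⟩ := post_step IH1
    exact ⟨a, by rw [rho_apply] at *; rw [b, IH2]⟩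

lemma sameCycle_scut {π : Equiv.Perm (Fin (n+1))} :
    ∀ k, ∀ v : Fin (n+1), n - (π.symm v).val = k →
      π.symm (Fin.last n) < π.symm v → (rho π).SameCycle v (scut π v) := by
  intro k
  induction k using Nat.strong_induction_on with
  | _ k IH =>
    intro v hk h
    obtain ⟨h1, h2, h3⟩ := post_step h
    rcases h3 with h3 | h3
    · rw [← h3]
      exact ⟨1, by simp [rho_apply]⟩
    · have hstep : (rho π).SameCycle v (rho π v) := ⟨1, by simp⟩
      have h5 : (π.symm v).val + 1 < n + 1 := by
        rw [← h3]
        exact (π.symm (rhoFun π v)).isLt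
      have hlt : n - (π.symm (rho π v)).val < k := by
        rw [rho_apply, h3]
        omega
      have := IH _ hlt (rho π v) rfl (by rw [rho_apply]; exact h1)
      rw [rho_apply] at this
      rw [show scut π (rhoFun π v) = scut π v from h2] at this
      exact hstep.trans (by rw [← rho_apply] at this; exact this)

end Stmt1Aux
namespace Stmt1Aux

variable {n : ℕ}

lemma rho_of_pos_lt {π : Equiv.Perm (Fin (n+1))} {v : Fin (n+1)}
    (h : π.symm v < π.symm (Fin.last n)) :
    rhoFun π v = NN π v ∧ (π.symm (NN π v)).val = (π.symm v).val + 1 := by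
  have hvlast : v ≠ Fin.last n := by
    intro hv; rw [hv] at h; exact lt_irrefl _ h
  have hposlast : π.symm v ≠ Fin.last n := by
    intro hl
    rw [hl] at h
    exact absurd (Fin.le_last (π.symm (Fin.last n))) (not_le.mpr h)
  have hval : (π.symm v + 1).val = (π.symm v).val + 1 :=
    Fin.val_add_one_of_lt (Fin.lt_last_iff_ne_last.mpr hposlast)
  have hNNpos : π.symm (NN π v) = π.symm v + 1 := symm_NN π v
  have hTle : (π.symm v).val + 1 ≤ (π.symm (Fin.last n)).val := by
    rw [Fin.lt_def] at h; omega
  have h2 : NN π v ∉ cuts π := by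
    intro hc
    have := cut_post hc
    rw [hNNpos, Fin.lt_def, hval] at this
    omega
  have h3 : NN π v ≠ π 0 := by
    intro hc
    rw [NN_apply] at hc
    have := π.injective hc
    rw [fin_add_one_eq_zero_iff] at this
    exact hposlast this
  exact ⟨rho_other hvlast h2 h3, by rw [hNNpos, hval]⟩

lemma orbit_path {π : Equiv.Perm (Fin (n+1))} :
    ∀ j : ℕ, (hj : j ≤ (π.symm (Fin.last n)).val) →
      ((rho π)^(j+1)) (Fin.last n) = π ⟨j, by have := (π.symm (Fin.last n)).isLt; omega⟩ := by
  intro j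
  induction j with
  | zero =>
    intro _
    rw [pow_one, rho_apply, rho_last]
    congr 1
  | succ j IHj =>
    intro hj
    have hstep : ((rho π)^(j+1+1)) (Fin.last n) = rho π (((rho π)^(j+1)) (Fin.last n)) := by
      rw [pow_succ', Equiv.Perm.mul_apply]
    rw [hstep, IHj (by omega)]
    have hlast := (π.symm (Fin.last n)).isLt
    have hjn : j < n + 1 := by omega
    set u : Fin (n+1) := π ⟨j, hjn⟩ with hu
    have hupos : π.symm u = ⟨j, hjn⟩ := Equiv.symm_apply_apply π _
    have hult : π.symm u < π.symm (Fin.last n) := by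
      rw [hupos, Fin.lt_def]
      exact hj
    obtain ⟨he, _⟩ := rho_of_pos_lt hult
    rw [rho_apply, he, NN_apply, hupos]
    congr 1
    apply Fin.ext
    rw [Fin.val_add_one_of_lt]
    rw [Fin.lt_def]
    simp only [Fin.val_last]
    omega

lemma sameCycle_top_of_le {π : Equiv.Perm (Fin (n+1))} {v : Fin (n+1)}
    (h : π.symm v ≤ π.symm (Fin.last n)) :
    (rho π).SameCycle (Fin.last n) v := by
  have hlt := (π.symm v).isLt
  have hle : (π.symm v).val ≤ (π.symm (Fin.last n)).val := h
  have := orbit_path (π := π) (π.symm v).val hle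
  refine ⟨((π.symm v).val + 1 : ℕ), ?_⟩
  rw [zpow_natCast, this]
  rw [show (⟨(π.symm v).val, _⟩ : Fin (n+1)) = π.symm v from Fin.ext rfl]
  exact Equiv.apply_symm_apply π v

lemma not_sameCycle_top {π : Equiv.Perm (Fin (n+1))} {v : Fin (n+1)}
    (h : π.symm (Fin.last n) < π.symm v) :
    ¬ (rho π).SameCycle (Fin.last n) v := by
  intro hs
  have claim : ∀ k : ℕ, (π.symm (((rho π)^k) (Fin.last n))).val ≤
      (π.symm (Fin.last n)).val := by
    intro k
    induction k with
    | zero => simp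
    | succ k IHk =>
      have hstep : ((rho π)^(k+1)) (Fin.last n) = rho π (((rho π)^k) (Fin.last n)) := by
        rw [pow_succ', Equiv.Perm.mul_apply]
      rw [hstep]
      set u := ((rho π)^k) (Fin.last n) with hu
      by_cases hul : u = Fin.last n
      · rw [hul, rho_apply, rho_last, Equiv.symm_apply_apply]
        simp
      · have : π.symm u ≠ π.symm (Fin.last n) := fun hh => hul (π.symm.injective hh)
        have hlt : π.symm u < π.symm (Fin.last n) := by
          rw [Fin.lt_def]
          rcases Nat.lt_or_ge (π.symm u).val (π.symm (Fin.last n)).val with hh | hh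
          · exact hh
          · exact absurd (Fin.ext (by omega) : π.symm u = π.symm (Fin.last n)) this
        obtain ⟨he, hv⟩ := rho_of_pos_lt hlt
        rw [rho_apply, he, hv]
        rw [Fin.lt_def] at hlt
        omega
  obtain ⟨i, _, hi⟩ := hs.exists_pow_eq'
  have := claim i
  rw [hi] at this
  rw [Fin.lt_def] at h
  omega

/-- Intrinsic characterization of the cut set in terms of `rho` alone. -/
lemma mem_cuts_iff_sameCycle {π : Equiv.Perm (Fin (n+1))} (w : Fin (n+1)) :
    w ∈ cuts π ↔ (¬ (rho π).SameCycle (Fin.last n) w ∧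
      ∀ v, (rho π).SameCycle w v → w ≤ v) := by
  constructor
  · intro hw
    refine ⟨not_sameCycle_top (cut_post hw), fun v hsc => ?_⟩
    obtain ⟨i, _, hi⟩ := hsc.exists_pow_eq'
    obtain ⟨hpost, hscut⟩ := post_pow (cut_post hw) i
    rw [hi] at hpost hscut
    rw [scut_of_cut hw] at hscut
    have := (scut_spec hpost).2.2.1
    rw [hscut] at this
    exact this
  · rintro ⟨h1, h2⟩
    have hpost : π.symm (Fin.last n) < π.symm w := by
      by_contra hc
      exact h1 (sameCycle_top_of_le (not_lt.mp hc))
    obtain ⟨hs1, _, hs3, _⟩ := scut_spec hpost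
    have := h2 _ (sameCycle_scut (n - (π.symm w).val) w rfl hpost)
    have heq : scut π w = w := le_antisymm hs3 this
    rw [← heq]
    exact hs1

end Stmt1Aux
namespace Stmt1Aux

variable {n : ℕ}

def cutsR (ρ : Equiv.Perm (Fin (n+1))) : Finset (Fin (n+1)) :=
  Finset.univ.filter (fun w => ¬ ρ.SameCycle (Fin.last n) w ∧ ∀ v, ρ.SameCycle w v → w ≤ v)

lemma cutsR_rho (π : Equiv.Perm (Fin (n+1))) : cutsR (rho π) = cuts π := by
  ext w
  simp only [cutsR, Finset.mem_filter, Finset.mem_univ, true_and]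
  exact (mem_cuts_iff_sameCycle w).symm

noncomputable def recoverNN (ρ : Equiv.Perm (Fin (n+1))) (x : Fin (n+1)) : Fin (n+1) :=
  if x = Fin.last n then
    (if h : (cutsR ρ).Nonempty then (cutsR ρ).max' h else ρ (Fin.last n))
  else if ρ x ∈ cutsR ρ then
    (if h : ((cutsR ρ).filter (fun w => w < ρ x)).Nonempty
     then ((cutsR ρ).filter (fun w => w < ρ x)).max' h else ρ (Fin.last n))
  else ρ x

lemma NN_eq_recover (π : Equiv.Perm (Fin (n+1))) (x : Fin (n+1)) :
    NN π x = recoverNN (rho π) x := by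
  have hcR := cutsR_rho π
  unfold recoverNN
  simp only [hcR]
  by_cases hx : x = Fin.last n
  · subst hx
    rw [if_pos rfl]
    by_cases hc : (cuts π).Nonempty
    · rw [dif_pos hc]
      exact le_antisymm (Finset.le_max' _ _ (firstPost_max hc).1)
        ((firstPost_max hc).2 _ (Finset.max'_mem _ hc))
    · rw [dif_neg hc, rho_apply, rho_last]
      exact firstPost_eq_pi0 (Finset.not_nonempty_iff_eq_empty.mp hc)
  · rw [if_neg hx]
    by_cases h2 : rho π x ∈ cuts π
    · rw [if_pos h2]
      rw [rho_apply] at h2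
      by_cases hb2 : NN π x ∈ cuts π
      · obtain ⟨hc, hle, hlt, hmin⟩ := rho_nn_cut_spec hx hb2
        have hmemf : NN π x ∈ (cuts π).filter (fun w => w < rho π x) := by
          rw [Finset.mem_filter]
          exact ⟨hb2, by rw [rho_apply]; exact hlt⟩
        rw [dif_pos ⟨NN π x, hmemf⟩]
        refine le_antisymm (Finset.le_max' _ _ hmemf) ?_
        apply Finset.max'_le
        intro y hy
        rw [Finset.mem_filter, rho_apply] at hy
        by_contra hno
        exact absurd (hmin y hy.1 (lt_of_not_ge hno)) (not_le.mpr hy.2)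
      · by_cases hb3 : NN π x = π 0
        · obtain ⟨hne, hc, hle, hmin⟩ := rho_lastletter_spec hx hb2 hb3
          rw [dif_neg, rho_apply, rho_last]
          · exact hb3
          · rintro ⟨w, hw⟩
            rw [Finset.mem_filter, rho_apply] at hw
            exact absurd (hmin w hw.1) (not_le.mpr hw.2)
        · exfalso
          rw [rho_other hx hb2 hb3] at h2
          exact hb2 h2
    · rw [if_neg h2, rho_apply]
      rw [rho_apply] at h2
      by_cases hb2 : NN π x ∈ cuts π
      · exact absurd (rho_nn_cut_spec hx hb2).1 h2
      · by_cases hb3 : NN π x = π 0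
        · exact absurd (rho_lastletter_spec hx hb2 hb3).2.1 h2
        · exact (rho_other hx hb2 hb3).symm

lemma word_formula (σ : Equiv.Perm (Fin (n+1))) :
    ∀ (j : ℕ) (hj : j < n+1), σ ⟨j, hj⟩ = ((NN σ)^j) (σ 0) := by
  intro j
  induction j with
  | zero =>
    intro hj
    rw [pow_zero]
    simp only [Equiv.Perm.one_apply]
    congr 1
  | succ j IHj =>
    intro hj
    rw [pow_succ', Equiv.Perm.mul_apply, ← IHj (by omega), NN_apply,
      Equiv.symm_apply_apply]
    congr 1
    apply Fin.ext
    rw [Fin.val_add_one_of_lt]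
    rw [Fin.lt_def]
    simp only [Fin.val_last]
    omega

theorem Psi_injective : Function.Injective (Psi (n := n)) := by
  intro π π' h
  have hrho : rho π = rho π' := by
    apply Equiv.ext
    intro x
    have hx := congrArg (fun (e : Equiv.Perm (Fin (n+1))) => e (x+1)) h
    rw [Psi_apply, Psi_apply, add_sub_cancel_right] at hx
    rw [rho_apply, rho_apply]
    exact hx
  have hNNe : NN π = NN π' := by
    apply Equiv.ext
    intro x
    rw [NN_eq_recover, NN_eq_recover, hrho]
  have h0 : π 0 = π' 0 := by
    have := congrArg (fun (e : Equiv.Perm (Fin (n+1))) => e (Fin.last n)) hrho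
    simp only [rho_apply] at this
    rw [rho_last, rho_last] at this
    exact this
  apply Equiv.ext
  intro x
  have w1 := word_formula π x.val x.isLt
  have w2 := word_formula π' x.val x.isLt
  rw [show (⟨x.val, x.isLt⟩ : Fin (n+1)) = x from Fin.ext rfl] at w1 w2
  rw [w1, w2, hNNe, h0]

end Stmt1Aux
/-- the triple set-valued statistics (Asc₂, Des, Suc) and
(Êxc, Aexc, F̂ix) are equidistributed over 𝔖ₙ. -/
theorem stmt1 (n : ℕ) (hn : 0 < n) (S₁ S₂ S₃ : Finset ℕ)
    (h₁ : S₁ ⊆ Finset.Icc 1 n) (h₂ : S₂ ⊆ Finset.Icc 1 n) (h₃ : S₃ ⊆ Finset.Icc 1 n) :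
    (Finset.univ.filter (fun π : Equiv.Perm (Fin n) =>
        Asc2 π = S₁ ∧ DesSet π = S₂ ∧ SucSet π = S₃)).card =
      (Finset.univ.filter (fun π : Equiv.Perm (Fin n) =>
        ExcHat π = S₁ ∧ Aexc π = S₂ ∧ FixHat π = S₃)).card := by
  obtain ⟨m, rfl⟩ : ∃ m, n = m + 1 := ⟨n - 1, by omega⟩
  apply Finset.card_bij (fun π _ => Stmt1Aux.Psi π)
  · intro π hπ
    rw [Finset.mem_filter] at hπ ⊢
    obtain ⟨_, hh1, hh2, hh3⟩ := hπ
    obtain ⟨e1, e2, e3⟩ := Stmt1Aux.stats_Psi π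
    exact ⟨Finset.mem_univ _, by rw [e1]; exact hh1, by rw [e2]; exact hh2,
      by rw [e3]; exact hh3⟩
  · intro a _ b _ hab
    exact Stmt1Aux.Psi_injective hab
  · intro σ hσ
    rw [Finset.mem_filter] at hσ
    obtain ⟨_, hh1, hh2, hh3⟩ := hσ
    obtain ⟨π, hπ⟩ := (Finite.injective_iff_surjective.mp Stmt1Aux.Psi_injective) σ
    refine ⟨π, ?_, hπ⟩
    rw [Finset.mem_filter]
    obtain ⟨e1, e2, e3⟩ := Stmt1Aux.stats_Psi π
    rw [hπ] at e1 e2 e3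
    exact ⟨Finset.mem_univ _, by rw [← e1]; exact hh1, by rw [← e2]; exact hh2,
      by rw [← e3]; exact hh3⟩
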